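/- Let (X,ρ) be a compact metric space and f : X → X continuous, and suppose there is a nonempty closed f-invariant set Y ⊆ X and a continuous surjection π : Y → Σ_p with π ∘ f = σ ∘ π, where p ≥ 2 and (Σ_p, σ) is the one-sided full shift on p symbols. Then there is ε₀ > 0 such that: for every α ∈ Σ_p there is a point x_α ∈ Y, with x_α ≠ x_β whenever α ≠ β, satisfying C^f_m(x_α, n, ε) ≤ C^σ_m(α, n, 1/2) for every ε ∈ (0, ε₀] and all m, n ∈ ℕ; consequently entr⁺(f, x_α) ≥ entr⁺(σ, α) and entr⁻(f, x_α) ≥ entr⁻(σ, α). -/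
import Mathlib


open Filter Topology Set MeasureTheory

section Defs

variable {X : Type*} [MetricSpace X]

/-- Bowen's metric `ρ^f_m(y,z) = max_{0 ≤ i < m} ρ(f^i y, f^i z)`. -/
noncomputable def bowenDist (f : X → X) (m : ℕ) (y z : X) : ℝ :=
  (((Finset.range m).sup fun i => nndist (f^[i] y) (f^[i] z)) : NNReal)

open scoped Classical in
/-- The correlation sum `C^f_m(x,n,ε)`. -/
noncomputable def corrSum (f : X → X) (m : ℕ) (x : X) (n : ℕ) (ε : ℝ) : ℝ :=
  (((Finset.range n ×ˢ Finset.range n).filter fun q =>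
      bowenDist f m (f^[q.1] x) (f^[q.2] x) ≤ ε).card : ℝ) / (n : ℝ) ^ 2

/-- `ĉ^f_m(x,ε) = limsup_{n→∞} C^f_m(x,n,ε)`. -/
noncomputable def corrUpper (f : X → X) (m : ℕ) (x : X) (ε : ℝ) : ℝ :=
  Filter.limsup (fun n : ℕ => corrSum f m x n ε) Filter.atTop

/-- `č^f_m(x,ε) = liminf_{n→∞} C^f_m(x,n,ε)`. -/
noncomputable def corrLower (f : X → X) (m : ℕ) (x : X) (ε : ℝ) : ℝ :=
  Filter.liminf (fun n : ℕ => corrSum f m x n ε) Filter.atTop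

/-- The upper local correlation entropy `entr⁺(f,x) = lim_{ε→0⁺} limsup_m (−1/m) log č^f_m(x,ε)`;
the limit as `ε → 0⁺` exists by monotonicity in `ε`, and is expressed here as a `limsup`
along `𝓝[>] 0` (with values in `EReal`). -/
noncomputable def entrUpper (f : X → X) (x : X) : EReal :=
  Filter.limsup (fun ε : ℝ =>
      Filter.limsup (fun m : ℕ => ((-(1 / (m : ℝ)) * Real.log (corrLower f m x ε) : ℝ) : EReal))
        Filter.atTop)
    (𝓝[>] (0 : ℝ))

/-- The lower local correlation entropy `entr⁻(f,x) = lim_{ε→0⁺} liminf_m (−1/m) log ĉ^f_m(x,ε)`. -/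
noncomputable def entrLower (f : X → X) (x : X) : EReal :=
  Filter.limsup (fun ε : ℝ =>
      Filter.liminf (fun m : ℕ => ((-(1 / (m : ℝ)) * Real.log (corrUpper f m x ε) : ℝ) : EReal))
        Filter.atTop)
    (𝓝[>] (0 : ℝ))

/-- `r_m(ε,K)`: the smallest cardinality of a subset of `K` which `(m,ε)`-spans `K`. -/
noncomputable def spanNumOn (f : X → X) (K : Set X) (m : ℕ) (ε : ℝ) : ℕ :=
  sInf {k : ℕ | ∃ A : Finset X, ↑A ⊆ K ∧ A.card = k ∧ ∀ y ∈ K, ∃ a ∈ A, bowenDist f m y a ≤ ε}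

/-- Bowen's topological entropy of `f` on `K` (for `K = univ`, of `f` itself;
for closed invariant `K`, of the restriction of `f` to `K`). -/
noncomputable def topEntropyOn (f : X → X) (K : Set X) : EReal :=
  Filter.limsup (fun ε : ℝ =>
      Filter.limsup (fun n : ℕ => (((1 / (n : ℝ)) * Real.log (spanNumOn f K n ε) : ℝ) : EReal))
        Filter.atTop)
    (𝓝[>] (0 : ℝ))

end Defs

/-- The one-sided full shift map `σ` on `Σ_p = {0,…,p−1}^{ℕ₀}`. -/
def shiftMap (p : ℕ) : (ℕ → Fin p) → (ℕ → Fin p) := fun x n => x (n + 1)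

/-- The metric `d(x,y) = 2^{-min{i : x_i ≠ y_i}}` on `Σ_p`
(`PiNat.dist x y = (1/2) ^ PiNat.firstDiff x y` for `x ≠ y`). -/
noncomputable instance fullShiftMetric (p : ℕ) : MetricSpace (ℕ → Fin p) := PiNat.metricSpace


section Aux

variable {X : Type*} [MetricSpace X]

lemma bowenDist_le_iff (f : X → X) (m : ℕ) (y z : X) {ε : ℝ} (hε : 0 ≤ ε) :
    bowenDist f m y z ≤ ε ↔ ∀ i < m, dist (f^[i] y) (f^[i] z) ≤ ε := by
  unfold bowenDist
  rw [← Real.coe_toNNReal ε hε, NNReal.coe_le_coe, Finset.sup_le_iff]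
  simp only [Finset.mem_range, ← NNReal.coe_le_coe, Real.coe_toNNReal ε hε, coe_nndist]

lemma corrSum_nonneg (f : X → X) (m : ℕ) (x : X) (n : ℕ) (ε : ℝ) :
    0 ≤ corrSum f m x n ε := by
  unfold corrSum; positivity

lemma corrSum_le_one (f : X → X) (m : ℕ) (x : X) (n : ℕ) (ε : ℝ) : corrSum f m x n ε ≤ 1 := by
  classical
  unfold corrSum
  apply div_le_one_of_le₀
  · calc ((Finset.filter _ _).card : ℝ) ≤ ((Finset.range n ×ˢ Finset.range n).card : ℝ) := by
          exact_mod_cast Finset.card_le_card (Finset.filter_subset _ _)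
      _ = (n : ℝ) ^ 2 := by simp [Finset.card_product, sq]
  · positivity

lemma corrSum_lower_bound [CompactSpace X]
    (f : X → X) (hf : Continuous f) (m : ℕ) (x : X) {ε : ℝ} (hε : 0 < ε) :
    ∃ c : ℝ, 0 < c ∧ ∀ᶠ n : ℕ in atTop, c ≤ corrSum f m x n ε := by
  classical
  have key : ∀ k : ℕ, ∃ δ > (0:ℝ), ∀ y z : X, dist y z < δ → bowenDist f k y z ≤ ε := by
    intro k
    induction k with
    | zero =>
      refine ⟨1, one_pos, fun y z _ => ?_⟩
      rw [bowenDist_le_iff f 0 y z hε.le]; intro i hi; omega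
    | succ k ih =>
      obtain ⟨δ₁, hδ₁, h1⟩ := ih
      obtain ⟨δ₂, hδ₂, h2⟩ := Metric.uniformContinuous_iff.mp
        (CompactSpace.uniformContinuous_of_continuous (hf.iterate k)) ε hε
      refine ⟨min δ₁ δ₂, lt_min hδ₁ hδ₂, fun y z hyz => ?_⟩
      rw [bowenDist_le_iff f _ y z hε.le]
      intro i hi
      rcases Nat.lt_succ_iff_lt_or_eq.mp hi with hi | rfl
      · exact (bowenDist_le_iff f k y z hε.le).mp
          (h1 y z (hyz.trans_le (min_le_left _ _))) i hi
      · exact (h2 (hyz.trans_le (min_le_right _ _))).le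
  obtain ⟨δ, hδ, hδ'⟩ := key m
  obtain ⟨t, -, htf, htc⟩ := finite_cover_balls_of_compact isCompact_univ (s := (univ : Set X))
    (e := δ/2) (by positivity)
  have hmem : ∀ i : ℕ, ∃ c ∈ htf.toFinset, f^[i] x ∈ Metric.ball c (δ/2) := by
    intro i
    have := htc (mem_univ (f^[i] x))
    simp only [mem_iUnion, exists_prop] at this
    obtain ⟨c, hc, hc2⟩ := this
    exact ⟨c, htf.mem_toFinset.mpr hc, hc2⟩
  choose ctr hctr hball using hmem
  set N : ℕ := htf.toFinset.card with hN
  have hNpos : 0 < N := Finset.card_pos.mpr ⟨ctr 0, hctr 0⟩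
  refine ⟨1 / (4 * (N:ℝ)^2), by positivity, ?_⟩
  filter_upwards [eventually_ge_atTop (2 * N)] with n hn
  have hn1 : 0 < n := by omega
  obtain ⟨y, -, hy⟩ := Finset.exists_le_card_fiber_of_mul_le_card_of_maps_to
    (f := ctr) (s := Finset.range n) (t := htf.toFinset) (n := n / N)
    (fun a _ => hctr a) ⟨ctr 0, hctr 0⟩ (by simpa [Finset.card_range] using Nat.mul_div_le n N)
  set fib := Finset.filter (fun i => ctr i = y) (Finset.range n) with hfib
  have hsub : fib ×ˢ fib ⊆ (Finset.range n ×ˢ Finset.range n).filter fun q =>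
      bowenDist f m (f^[q.1] x) (f^[q.2] x) ≤ ε := by
    intro q hq
    simp only [hfib, Finset.mem_product, Finset.mem_filter] at hq
    obtain ⟨⟨h1, h1'⟩, h2, h2'⟩ := hq
    rw [Finset.mem_filter]
    refine ⟨Finset.mem_product.mpr ⟨h1, h2⟩, hδ' _ _ ?_⟩
    have b1 := hball q.1
    have b2 := hball q.2
    rw [h1'] at b1; rw [h2'] at b2
    calc dist (f^[q.1] x) (f^[q.2] x) ≤ dist (f^[q.1] x) y + dist y (f^[q.2] x) :=
          dist_triangle _ _ _
      _ < δ/2 + δ/2 := by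
          rw [Metric.mem_ball] at b1 b2
          exact add_lt_add b1 (by rwa [dist_comm])
      _ = δ := by ring
  have hcard : ((n / N : ℕ) : ℝ)^2 ≤ (((Finset.range n ×ˢ Finset.range n).filter fun q =>
      bowenDist f m (f^[q.1] x) (f^[q.2] x) ≤ ε).card : ℝ) := by
    calc ((n / N : ℕ) : ℝ)^2 ≤ ((fib.card : ℝ))^2 := by
          apply pow_le_pow_left₀ (by positivity)
          exact_mod_cast hy
      _ = ((fib ×ˢ fib).card : ℝ) := by simp [Finset.card_product, sq]
      _ ≤ _ := by exact_mod_cast Finset.card_le_card hsub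
  have hdivN : (n : ℝ) / (2 * N) ≤ ((n / N : ℕ) : ℝ) := by
    have hmod : ((n % N : ℕ) : ℝ) < N := by exact_mod_cast Nat.mod_lt n hNpos
    have hdm : (N : ℝ) * ((n / N : ℕ) : ℝ) + ((n % N : ℕ) : ℝ) = (n : ℝ) := by
      exact_mod_cast Nat.div_add_mod n N
    have hNr : (0:ℝ) < N := by exact_mod_cast hNpos
    have h2n : 2 * (N:ℝ) ≤ n := by exact_mod_cast hn
    rw [div_le_iff₀ (by positivity)]
    nlinarith [show (0:ℝ) ≤ ((n / N : ℕ) : ℝ) by positivity]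
  unfold corrSum
  rw [le_div_iff₀ (by positivity)]
  calc (1 / (4 * (N:ℝ)^2)) * (n:ℝ)^2 = ((n:ℝ) / (2 * N))^2 := by
        field_simp; ring
    _ ≤ ((n / N : ℕ) : ℝ)^2 := by
        apply pow_le_pow_left₀ (by positivity) hdivN
    _ ≤ _ := hcard

end Aux

/-- If `(Y,f)` is a subsystem of `(X,f)` which is a topological extension of the full shift
`(Σ_p,σ)`, then there is `ε₀ > 0` and for every `α ∈ Σ_p` a point `x_α ∈ Y` (injectively chosen)
with `C^f_m(x_α,n,ε) ≤ C^σ_m(α,n,1/2)` for `ε ∈ (0,ε₀]`; consequently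
`entr⁺(f,x_α) ≥ entr⁺(σ,α)` and `entr⁻(f,x_α) ≥ entr⁻(σ,α)`. -/
theorem extension_of_full_shift {X : Type*} [MetricSpace X] [CompactSpace X]
    (f : X → X) (hf : Continuous f) (p : ℕ) (hp : 2 ≤ p)
    (Y : Set X) (hYne : Y.Nonempty) (hYcl : IsClosed Y) (hYinv : Set.MapsTo f Y Y)
    (π : Y → (ℕ → Fin p)) (hπcont : Continuous π) (hπsurj : Function.Surjective π)
    (hsemi : ∀ (y : X) (hy : y ∈ Y) (hfy : f y ∈ Y),
      π ⟨f y, hfy⟩ = shiftMap p (π ⟨y, hy⟩)) :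
    ∃ ε₀ : ℝ, 0 < ε₀ ∧
      ∃ sel : (ℕ → Fin p) → X, Function.Injective sel ∧
        ∀ α : ℕ → Fin p, sel α ∈ Y ∧
          (∀ ε : ℝ, 0 < ε → ε ≤ ε₀ → ∀ m n : ℕ, 0 < m → 0 < n →
            corrSum f m (sel α) n ε ≤ corrSum (shiftMap p) m α n (1 / 2)) ∧
          entrUpper (shiftMap p) α ≤ entrUpper f (sel α) ∧
          entrLower (shiftMap p) α ≤ entrLower f (sel α) := by
  classical
  have hYcomp : IsCompact Y := hYcl.isCompact
  haveI : CompactSpace Y := isCompact_iff_compactSpace.mp hYcomp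
  set σ : (ℕ → Fin p) → (ℕ → Fin p) := shiftMap p with hσ
  set F : Y → Y := hYinv.restrict f Y Y with hF
  have hFcoe : ∀ (y : Y) (i : ℕ), ((F^[i] y : Y) : X) = f^[i] (y : X) := by
    intro y i
    induction i with
    | zero => rfl
    | succ k ih =>
      rw [Function.iterate_succ_apply', Function.iterate_succ_apply', ← ih]
      rfl
  have hsemi1 : Function.Semiconj π F σ := fun y => hsemi y y.2 (hYinv y.2)
  have hsemiit : ∀ (i : ℕ) (y : Y), π (F^[i] y) = σ^[i] (π y) :=
    fun i y => (hsemi1.iterate_right i) y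
  have hπuc : UniformContinuous π := CompactSpace.uniformContinuous_of_continuous hπcont
  have key : ∀ ε' : ℝ, 0 < ε' → ∃ ε : ℝ, 0 < ε ∧ ∀ (y z : Y) (m : ℕ),
      bowenDist f m (y : X) (z : X) ≤ ε → bowenDist σ m (π y) (π z) ≤ ε' := by
    intro ε' hε'
    obtain ⟨δ, hδ, hδ'⟩ := Metric.uniformContinuous_iff.mp hπuc ε' hε'
    refine ⟨δ/2, by positivity, fun y z m hyz => ?_⟩
    rw [bowenDist_le_iff _ m _ _ hε'.le]
    intro i hi
    have h1 : dist (f^[i] (y:X)) (f^[i] (z:X)) ≤ δ/2 :=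
      (bowenDist_le_iff f m _ _ (by positivity)).mp hyz i hi
    have h2 : dist (F^[i] y) (F^[i] z) < δ := by
      rw [Subtype.dist_eq, hFcoe, hFcoe]
      linarith
    have h3 := (hδ' h2).le
    rwa [hsemiit i y, hsemiit i z] at h3
  obtain ⟨ε₀, hε₀, hkey₀⟩ := key (1/2) (by norm_num)
  set g : (ℕ → Fin p) → Y := Function.surjInv hπsurj with hg
  have hgπ : ∀ α, π (g α) = α := fun α => Function.surjInv_eq hπsurj α
  refine ⟨ε₀, hε₀, fun α => ((g α : Y) : X), ?_, ?_⟩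
  · intro α β h
    rw [← hgπ α, ← hgπ β, Subtype.ext h]
  intro α
  set x : X := ((g α : Y) : X) with hx
  have hxY : x ∈ Y := (g α).2
  -- general comparison of correlation sums
  have hcompare : ∀ (ε ε' : ℝ),
      (∀ (y z : Y) (m : ℕ), bowenDist f m (y:X) (z:X) ≤ ε → bowenDist σ m (π y) (π z) ≤ ε') →
      ∀ m n : ℕ, corrSum f m x n ε ≤ corrSum σ m α n ε' := by
    intro ε ε' htr m n
    rcases Nat.eq_zero_or_pos n with rfl | hn
    · simp [corrSum]
    unfold corrSum
    rw [div_le_div_iff_of_pos_right (by positivity)]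
    have hsub : ((Finset.range n ×ˢ Finset.range n).filter fun q =>
          bowenDist f m (f^[q.1] x) (f^[q.2] x) ≤ ε) ⊆
        ((Finset.range n ×ˢ Finset.range n).filter fun q =>
          bowenDist σ m (σ^[q.1] α) (σ^[q.2] α) ≤ ε') := by
      intro q hq
      rw [Finset.mem_filter] at hq ⊢
      refine ⟨hq.1, ?_⟩
      have h := htr (F^[q.1] (g α)) (F^[q.2] (g α)) m (by rw [hFcoe, hFcoe]; exact hq.2)
      rwa [hsemiit, hsemiit, hgπ] at h
    exact_mod_cast Finset.card_le_card hsub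
  -- boundedness facts
  have hBddAbove : ∀ (h : X → X) (z : X) (m : ℕ) (ε : ℝ),
      IsBoundedUnder (· ≤ ·) atTop (fun n : ℕ => corrSum h m z n ε) :=
    fun h z m ε => Filter.isBoundedUnder_of ⟨1, fun (n : ℕ) => corrSum_le_one h m z n ε⟩
  have hBddBelow : ∀ (h : X → X) (z : X) (m : ℕ) (ε : ℝ),
      IsBoundedUnder (· ≥ ·) atTop (fun n : ℕ => corrSum h m z n ε) :=
    fun h z m ε => Filter.isBoundedUnder_of ⟨0, fun (n : ℕ) => corrSum_nonneg h m z n ε⟩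
  have hBddAboveσ : ∀ (m : ℕ) (ε : ℝ),
      IsBoundedUnder (· ≤ ·) atTop (fun n : ℕ => corrSum σ m α n ε) :=
    fun m ε => Filter.isBoundedUnder_of ⟨1, fun (n : ℕ) => corrSum_le_one σ m α n ε⟩
  -- positivity of lower correlation sums
  have hpos : ∀ (m : ℕ) (ε : ℝ), 0 < ε → 0 < corrLower f m x ε := by
    intro m ε hε
    obtain ⟨c, hc, hev⟩ := corrSum_lower_bound f hf m x hε
    have : c ≤ corrLower f m x ε :=
      le_liminf_of_le ((hBddAbove f x m ε).isCoboundedUnder_ge) hev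
    linarith
  have hposU : ∀ (m : ℕ) (ε : ℝ), 0 < ε → 0 < corrUpper f m x ε := by
    intro m ε hε
    obtain ⟨c, hc, hev⟩ := corrSum_lower_bound f hf m x hε
    have : c ≤ corrUpper f m x ε :=
      le_limsup_of_frequently_le hev.frequently (hBddAbove f x m ε)
    linarith
  refine ⟨hxY, ?_, ?_, ?_⟩
  · -- correlation sum estimate, ε ≤ ε₀
    intro ε hε hεε₀ m n _ _
    exact hcompare ε (1/2) (fun y z m h => hkey₀ y z m (h.trans hεε₀)) m n
  · -- entrUpper
    unfold entrUpper
    refine limsup_le_of_le (by isBoundedDefault) ?_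
    filter_upwards [self_mem_nhdsWithin] with δ hδ
    rw [Set.mem_Ioi] at hδ
    obtain ⟨ε₁, hε₁, htr⟩ := key δ hδ
    have inner : ∀ ε : ℝ, 0 < ε → ε ≤ ε₁ →
        limsup (fun m : ℕ => ((-(1/(m:ℝ)) * Real.log (corrLower σ m α δ) : ℝ) : EReal)) atTop
        ≤ limsup (fun m : ℕ => ((-(1/(m:ℝ)) * Real.log (corrLower f m x ε) : ℝ) : EReal))
            atTop := by
      intro ε hε hεε₁
      refine limsup_le_limsup (Filter.Eventually.of_forall fun m => ?_)
        (by isBoundedDefault) (by isBoundedDefault)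
      have hab : corrLower f m x ε ≤ corrLower σ m α δ := by
        refine liminf_le_liminf
          (Filter.Eventually.of_forall fun n =>
            hcompare ε δ (fun y z m h => htr y z m (h.trans hεε₁)) m n)
          (hBddBelow f x m ε) ((hBddAboveσ m δ).isCoboundedUnder_ge)
      have ha := hpos m ε hε
      have hlog : Real.log (corrLower f m x ε) ≤ Real.log (corrLower σ m α δ) :=
        Real.log_le_log ha hab
      exact EReal.coe_le_coe_iff.mpr
        (mul_le_mul_of_nonpos_left hlog (neg_nonpos.mpr (by positivity)))
    refine le_limsup_of_frequently_le' ?_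
    have hmem : Set.Ioc (0:ℝ) ε₁ ∈ 𝓝[>] (0:ℝ) := Ioc_mem_nhdsGT hε₁
    exact ((eventually_iff_exists_mem.mpr
      ⟨Set.Ioc 0 ε₁, hmem, fun ε hε => inner ε hε.1 hε.2⟩).frequently)
  · -- entrLower
    unfold entrLower
    refine limsup_le_of_le (by isBoundedDefault) ?_
    filter_upwards [self_mem_nhdsWithin] with δ hδ
    rw [Set.mem_Ioi] at hδ
    obtain ⟨ε₁, hε₁, htr⟩ := key δ hδ
    have inner : ∀ ε : ℝ, 0 < ε → ε ≤ ε₁ →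
        liminf (fun m : ℕ => ((-(1/(m:ℝ)) * Real.log (corrUpper σ m α δ) : ℝ) : EReal)) atTop
        ≤ liminf (fun m : ℕ => ((-(1/(m:ℝ)) * Real.log (corrUpper f m x ε) : ℝ) : EReal))
            atTop := by
      intro ε hε hεε₁
      refine liminf_le_liminf (Filter.Eventually.of_forall fun m => ?_)
        (by isBoundedDefault) (by isBoundedDefault)
      have hab : corrUpper f m x ε ≤ corrUpper σ m α δ := by
        refine limsup_le_limsup
          (Filter.Eventually.of_forall fun n =>
            hcompare ε δ (fun y z m h => htr y z m (h.trans hεε₁)) m n)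
          ((hBddBelow f x m ε).isCoboundedUnder_le) (hBddAboveσ m δ)
      have ha := hposU m ε hε
      have hlog : Real.log (corrUpper f m x ε) ≤ Real.log (corrUpper σ m α δ) :=
        Real.log_le_log ha hab
      exact EReal.coe_le_coe_iff.mpr
        (mul_le_mul_of_nonpos_left hlog (neg_nonpos.mpr (by positivity)))
    refine le_limsup_of_frequently_le' ?_
    have hmem : Set.Ioc (0:ℝ) ε₁ ∈ 𝓝[>] (0:ℝ) := Ioc_mem_nhdsGT hε₁
    exact ((eventually_iff_exists_mem.mpr
      ⟨Set.Ioc 0 ε₁, hmem, fun ε hε => inner ε hε.1 hε.2⟩).frequently)
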